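/- Let (G, τ) be a topological abelian group of finite exponent and H ≤ G an open subgroup. If (H, τ|_H) is a Mackey group, then (G, τ) is a Mackey group. -/

import Mathlib

open scoped Topology
open Filter

noncomputable section

abbrev Circle1 : Type := AddCircle (1 : ℝ)

def Tpos : Set Circle1 := (fun r : ℝ => (r : Circle1)) '' Set.Icc (-(1/4) : ℝ) (1/4)

variable {G : Type*}

def IsChar [AddCommGroup G] (τ : TopologicalSpace G) (φ : G →+ Circle1) : Prop :=
  @Continuous G Circle1 τ _ φ

def QuasiConvex [AddCommGroup G] (τ : TopologicalSpace G) (M : Set G) : Prop :=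
  ∀ x ∉ M, ∃ φ : G →+ Circle1, IsChar τ φ ∧ (∀ y ∈ M, φ y ∈ Tpos) ∧ φ x ∉ Tpos

def LocallyQuasiConvex [AddCommGroup G] (τ : TopologicalSpace G) : Prop :=
  ∀ U ∈ @nhds G τ 0, ∃ M ∈ @nhds G τ 0, QuasiConvex τ M ∧ M ⊆ U

def Compatible [AddCommGroup G] (τ τ' : TopologicalSpace G) : Prop :=
  ∀ φ : G →+ Circle1, IsChar τ φ ↔ IsChar τ' φ

def IsMackey [AddCommGroup G] (τ : TopologicalSpace G) : Prop :=
  @IsTopologicalAddGroup G τ _ ∧ LocallyQuasiConvex τ ∧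
    ∀ τ' : TopologicalSpace G, @IsTopologicalAddGroup G τ' _ →
      LocallyQuasiConvex τ' → Compatible τ τ' → τ ≤ τ'

def BoundedGroup (G : Type*) [AddCommGroup G] : Prop :=
  ∃ m : ℕ, 0 < m ∧ ∀ x : G, m • x = 0

def Precompact [AddCommGroup G] (τ : TopologicalSpace G) : Prop :=
  ∀ U ∈ @nhds G τ 0, ∃ F : Finset G, ∀ x : G, ∃ f ∈ F, x - f ∈ U

def LinearTop [AddCommGroup G] (τ : TopologicalSpace G) : Prop :=
  ∀ U ∈ @nhds G τ 0, ∃ H : AddSubgroup G, @IsOpen G τ (H : Set G) ∧ (H : Set G) ⊆ U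

def DuallyClosed [AddCommGroup G] (τ : TopologicalSpace G) (H : AddSubgroup G) : Prop :=
  ∀ x : G, x ∉ H → ∃ φ : G →+ Circle1, IsChar τ φ ∧ (∀ h ∈ H, φ h = 0) ∧ φ x ≠ 0

def WeakTop [AddCommGroup G] (τ : TopologicalSpace G) : TopologicalSpace G :=
  ⨅ φ : {φ : G →+ Circle1 // IsChar τ φ}, TopologicalSpace.induced φ.1 inferInstance

/-! ### Auxiliary lemmas about `Tpos` -/

open Set

lemma zero_mem_Tpos : (0 : Circle1) ∈ Tpos :=
  ⟨0, by norm_num, by norm_num⟩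

lemma not_mem_Tpos {r : ℝ} (h1 : 1/4 < r) (h2 : r < 3/4) : (r : Circle1) ∉ Tpos := by
  rintro ⟨s, hs, heq⟩
  simp only at heq
  have h0 : ((s - r : ℝ) : Circle1) = 0 := by
    rw [AddCircle.coe_sub, heq, sub_self]
  rw [AddCircle.coe_eq_zero_iff] at h0
  obtain ⟨n, hn⟩ := h0
  have hn' : (n : ℝ) = s - r := by simpa using hn
  obtain ⟨hs1, hs2⟩ := hs
  have l1 : (n : ℝ) < 0 := by rw [hn']; linarith
  have l2 : (-1 : ℝ) < n := by rw [hn']; linarith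
  have k1 : (n : ℤ) < 0 := by exact_mod_cast l1
  have k2 : (-1 : ℤ) < n := by exact_mod_cast l2
  omega

lemma aux_escape {r : ℝ} (h1 : 0 < r) (h2 : r ≤ 1/2) :
    ∃ n : ℕ, ((n * r : ℝ) : Circle1) ∉ Tpos := by
  by_cases h : 1/4 < r
  · exact ⟨1, by rw [Nat.cast_one, one_mul]; exact not_mem_Tpos h (by linarith)⟩
  · push_neg at h
    have hex : ∃ n : ℕ, 1/4 < (n : ℝ) * r := by
      obtain ⟨n, hn⟩ := exists_nat_gt (1/(4*r))
      refine ⟨n, ?_⟩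
      rw [div_lt_iff₀ (by positivity)] at hn
      nlinarith
    classical
    let n₀ := Nat.find hex
    have hspec : 1/4 < (n₀ : ℝ) * r := Nat.find_spec hex
    have hpos : 0 < n₀ := by
      rcases Nat.eq_zero_or_pos n₀ with h0 | h0
      · exfalso; have := hspec; rw [h0] at this; norm_num at this
      · exact h0
    have hmin : ¬(1/4 < ((n₀ - 1 : ℕ) : ℝ) * r) := Nat.find_min hex (by omega)
    push_neg at hmin
    have hcast : ((n₀ - 1 : ℕ) : ℝ) = (n₀ : ℝ) - 1 := by
      have h1' : (1:ℕ) ≤ n₀ := hpos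
      push_cast [Nat.cast_sub h1']; ring
    have hub : (n₀ : ℝ) * r ≤ 1/2 := by
      rw [hcast] at hmin; nlinarith
    exact ⟨n₀, not_mem_Tpos hspec (by linarith)⟩

lemma eq_zero_of_forall_zsmul_mem_Tpos {t : Circle1} (h : ∀ j : ℤ, j • t ∈ Tpos) : t = 0 := by
  by_contra ht
  set e := AddCircle.equivIco (1:ℝ) (-(1/2)) with he
  obtain ⟨r, hr⟩ : ∃ r : ℝ, r ∈ Set.Ico (-(1/2) : ℝ) (-(1/2)+1) ∧ (r : Circle1) = t :=
    ⟨(e t).1, (e t).2, (e).symm_apply_apply t⟩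
  obtain ⟨⟨hr1, hr2⟩, hrt⟩ := hr
  rcases lt_trichotomy r 0 with hneg | hzero | hpos
  · obtain ⟨n, hn⟩ := aux_escape (r := -r) (by linarith) (by linarith)
    apply hn
    have hh : ((n : ℤ) * -1) • t = ((n * -r : ℝ) : Circle1) := by
      rw [← hrt, ← AddCircle.coe_zsmul 1]
      congr 1
      push_cast [zsmul_eq_mul]
      ring
    rw [← hh]; exact h _
  · exact ht (by rw [← hrt, hzero]; norm_num)
  · obtain ⟨n, hn⟩ := aux_escape (r := r) hpos (by linarith)
    apply hn
    have hh : ((n : ℤ)) • t = ((n * r : ℝ) : Circle1) := by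
      rw [← hrt, ← AddCircle.coe_zsmul 1]
      congr 1
      push_cast [zsmul_eq_mul]
      ring
    rw [← hh]; exact h _

lemma Tpos_mem_nhds : Tpos ∈ 𝓝 (0 : Circle1) := by
  have hopen : IsOpen ((fun r : ℝ => (r : Circle1)) '' Set.Ioo (-(1/4)) (1/4)) :=
    QuotientAddGroup.isOpenMap_coe _ isOpen_Ioo
  have h0 : (0 : Circle1) ∈ (fun r : ℝ => (r : Circle1)) '' Set.Ioo (-(1/4)) (1/4) :=
    ⟨0, by norm_num, by norm_num⟩
  exact mem_of_superset (hopen.mem_nhds h0) (image_mono Ioo_subset_Icc_self)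

/-! ### Character extension lemmas -/

lemma baer_circle : Module.Baer ℤ Circle1 := Module.Baer.of_divisible _

lemma fact_hom {A B : Type*} [AddCommGroup A] [AddCommGroup B] (φ : A →+ B) (f : A →+ Circle1)
    (hker : ∀ a, φ a = 0 → f a = 0) : ∃ g : B →+ Circle1, ∀ a, g (φ a) = f a := by
  have hlift : ∀ a ∈ φ.ker, f a = 0 := fun a ha => hker a ha
  obtain ⟨h, hh⟩ := baer_circle.extension_property_addMonoidHom (QuotientAddGroup.kerLift φ)
    (QuotientAddGroup.kerLift_injective φ) (QuotientAddGroup.lift φ.ker f hlift)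
  refine ⟨h, fun a => ?_⟩
  have := DFunLike.congr_fun hh (QuotientAddGroup.mk a)
  simp at this
  exact this.trans rfl

variable [AddCommGroup G]

lemma exists_extension (H : AddSubgroup G) (ψ : H →+ Circle1) :
    ∃ g : G →+ Circle1, ∀ h : H, g h = ψ h := by
  obtain ⟨g, hg⟩ := fact_hom H.subtype ψ (fun a ha => by
    have ha' : a = 0 := Subtype.ext (by simpa using ha)
    rw [ha', map_zero])
  exact ⟨g, hg⟩

lemma exists_extension_vanishing (H N : AddSubgroup G) (ψ : H →+ Circle1)
    (hk : ∀ h : H, (h : G) ∈ N → ψ h = 0) :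
    ∃ g : G →+ Circle1, (∀ h : H, g h = ψ h) ∧ ∀ n ∈ N, g n = 0 := by
  obtain ⟨g, hg⟩ := fact_hom ((QuotientAddGroup.mk' N).comp H.subtype) ψ (fun a ha => by
    apply hk
    rw [AddMonoidHom.comp_apply] at ha
    exact (QuotientAddGroup.eq_zero_iff _).mp ha)
  refine ⟨(g.comp (QuotientAddGroup.mk' N)), fun h => hg h, fun n hn => ?_⟩
  have h0 : (QuotientAddGroup.mk' N) n = 0 := (QuotientAddGroup.eq_zero_iff _).mpr hn
  simp [AddMonoidHom.comp_apply, h0]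

/-! ### Topological helper lemmas -/

lemma isChar_of_ker_nhds (τ : TopologicalSpace G) (htg : @IsTopologicalAddGroup G τ _)
    (N : AddSubgroup G) (hN : (N : Set G) ∈ @nhds G τ 0) (χ : G →+ Circle1)
    (hker : ∀ n ∈ N, χ n = 0) : IsChar τ χ := by
  letI := τ; haveI := htg
  refine continuous_of_continuousAt_zero χ ?_
  rw [ContinuousAt, map_zero]
  intro W hW
  rw [mem_map]
  exact mem_of_superset hN (fun n hn => by
    simp only [mem_preimage, hker n hn]
    exact mem_of_mem_nhds hW)

lemma isChar_restrict (τ : TopologicalSpace G) (χ : G →+ Circle1) (h : IsChar τ χ)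
    (H : AddSubgroup G) :
    IsChar (TopologicalSpace.induced (Subtype.val : H → G) τ) (χ.comp H.subtype) := by
  have hval : @Continuous H G (TopologicalSpace.induced (Subtype.val : H → G) τ) τ
      Subtype.val := continuous_induced_dom
  exact @Continuous.comp H G Circle1 _ τ _ _ _ (h) (hval)

lemma isChar_of_openSubgroup_cont (τ : TopologicalSpace G) (htg : @IsTopologicalAddGroup G τ _)
    (H : AddSubgroup G) (hopen : @IsOpen G τ (H : Set G)) (g : G →+ Circle1)
    (hg : IsChar (TopologicalSpace.induced (Subtype.val : H → G) τ) (g.comp H.subtype)) :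
    IsChar τ g := by
  letI := τ; haveI := htg
  refine continuous_of_continuousAt_zero g ?_
  rw [ContinuousAt, map_zero]
  intro W hW
  rw [mem_map]
  have hc : @ContinuousAt H Circle1 (TopologicalSpace.induced (Subtype.val : H → G) τ) _
      (g.comp H.subtype) 0 := by
    exact @Continuous.continuousAt H Circle1 (TopologicalSpace.induced _ τ) _ _ _ hg
  have h0 : (g.comp H.subtype) (0 : H) = 0 := map_zero _
  have hmem : (g.comp H.subtype) ⁻¹' W ∈ @nhds H (TopologicalSpace.induced Subtype.val τ) 0 := by
    apply hc
    rw [h0]; exact hW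
  rw [nhds_induced] at hmem
  obtain ⟨V, hV, hVW⟩ := hmem
  have hval0 : (Subtype.val : H → G) 0 = 0 := rfl
  rw [hval0] at hV
  refine mem_of_superset (inter_mem hV (hopen.mem_nhds H.zero_mem)) ?_
  rintro x ⟨hxV, hxH⟩
  have : (⟨x, hxH⟩ : H) ∈ Subtype.val ⁻¹' V := hxV
  exact hVW this

/-- Locally quasi-convex topologies on bounded groups are linear. -/
lemma linearTop_of_lqc (hb : BoundedGroup G) (τ : TopologicalSpace G)
    (htg : @IsTopologicalAddGroup G τ _) (hlqc : LocallyQuasiConvex τ) : LinearTop τ := by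
  classical
  obtain ⟨m, hm0, hmx⟩ := hb
  letI := τ; haveI := htg
  intro U hU
  obtain ⟨M, hM, hqc, hMU⟩ := hlqc U hU
  set N : AddSubgroup G :=
    { carrier := {x | ∀ φ : G →+ Circle1, IsChar τ φ → (∀ y ∈ M, φ y ∈ Tpos) → φ x = 0}
      zero_mem' := fun φ _ _ => map_zero φ
      add_mem' := fun ha hb' φ hφ hφM => by
        rw [map_add, ha φ hφ hφM, hb' φ hφ hφM, add_zero]
      neg_mem' := fun ha φ hφ hφM => by
        rw [map_neg, ha φ hφ hφM, neg_zero] } with hN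
  have hNM : (N : Set G) ⊆ M := by
    intro x hx
    by_contra hxM
    obtain ⟨φ, hφ, hφM, hφx⟩ := hqc x hxM
    have := hx φ hφ hφM
    exact hφx (this ▸ zero_mem_Tpos)
  have hreduce : ∀ (j : ℤ) (x : G), j • x = ((j % (m : ℤ)).toNat) • x := by
    intro j x
    have hmod : 0 ≤ j % (m : ℤ) := Int.emod_nonneg j (by exact_mod_cast hm0.ne')
    have htn : (((j % (m : ℤ)).toNat : ℤ)) = j % (m : ℤ) := Int.toNat_of_nonneg hmod
    have hdecomp : j = (m : ℤ) * (j / (m : ℤ)) + j % (m : ℤ) := (Int.mul_ediv_add_emod j m).symm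
    calc j • x = ((m : ℤ) * (j / (m : ℤ)) + j % (m : ℤ)) • x := by rw [← hdecomp]
      _ = ((m : ℤ) * (j / (m : ℤ))) • x + (j % (m : ℤ)) • x := add_zsmul x _ _
      _ = (j / (m : ℤ)) • ((m : ℤ) • x) + (j % (m : ℤ)) • x := by
          rw [mul_comm, mul_zsmul]
      _ = (j % (m : ℤ)) • x := by
          have : (m : ℤ) • x = 0 := by
            rw [natCast_zsmul, hmx]
          rw [this, smul_zero, zero_add]
      _ = ((j % (m : ℤ)).toNat) • x := by rw [← natCast_zsmul, htn]
  have hNnhds : (N : Set G) ∈ @nhds G τ 0 := by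
    have hint : (⋂ n ∈ Finset.range m, (fun x : G => (n : ℤ) • x) ⁻¹' M) ∈ @nhds G τ 0 := by
      refine (Filter.biInter_finset_mem _).mpr (fun n _ => ?_)
      have hc : Continuous (fun x : G => (n : ℤ) • x) := continuous_zsmul _
      have hM' : M ∈ 𝓝 ((fun x : G => (n : ℤ) • x) 0) := by simpa using hM
      exact hc.continuousAt.preimage_mem_nhds hM'
    refine mem_of_superset hint ?_
    intro x hx φ hφ hφM
    simp only [Finset.mem_range, mem_iInter, mem_preimage] at hx
    apply eq_zero_of_forall_zsmul_mem_Tpos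
    intro j
    rw [← map_zsmul]
    apply hφM
    rw [hreduce j x]
    have hlt : (j % (m : ℤ)).toNat < m := by
      have := Int.emod_lt_of_pos j (by exact_mod_cast hm0 : (0:ℤ) < m)
      omega
    have hx' := hx _ hlt
    rwa [natCast_zsmul] at hx'
  exact ⟨N, AddSubgroup.isOpen_of_mem_nhds N hNnhds, hNM.trans hMU⟩

/-- Restriction of a locally quasi-convex topology to a subgroup is locally quasi-convex. -/
lemma lqc_induced (τ : TopologicalSpace G) (hlqc : LocallyQuasiConvex τ) (H : AddSubgroup G) :
    LocallyQuasiConvex (TopologicalSpace.induced (Subtype.val : H → G) τ) := by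
  intro U hU
  rw [nhds_induced] at hU
  have hval0 : (Subtype.val : H → G) 0 = 0 := rfl
  rw [hval0] at hU
  obtain ⟨W, hW, hWU⟩ := hU
  obtain ⟨M, hM, hqc, hMW⟩ := hlqc W hW
  refine ⟨Subtype.val ⁻¹' M, ?_, ?_, fun x hx => hWU (hMW hx)⟩
  · rw [nhds_induced, hval0]
    exact preimage_mem_comap hM
  · intro x hx
    obtain ⟨φ, hφ, hφM, hφx⟩ := hqc x.1 hx
    exact ⟨φ.comp H.subtype, isChar_restrict τ φ hφ H, fun y hy => hφM y.1 hy, hφx⟩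

lemma isOpen_induced_decomp (τ : TopologicalSpace G) (H : AddSubgroup G) {s : Set H}
    (h : @IsOpen H (TopologicalSpace.induced (Subtype.val : H → G) τ) s) :
    ∃ V : Set G, @IsOpen G τ V ∧ Subtype.val ⁻¹' V = s := by
  letI := τ
  exact isOpen_induced_iff.mp h

lemma isOpen_induced_of (τ : TopologicalSpace G) (H : AddSubgroup G) {V : Set G}
    (hV : @IsOpen G τ V) :
    @IsOpen H (TopologicalSpace.induced (Subtype.val : H → G) τ) (Subtype.val ⁻¹' V) := by
  letI := τ
  exact isOpen_induced_iff.mpr ⟨V, hV, rfl⟩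

lemma preimage_nhds_translate (τ : TopologicalSpace G) (htg : @IsTopologicalAddGroup G τ _)
    {s : Set G} {x : G} (hs : @IsOpen G τ s) (hx : x ∈ s) :
    (x + ·) ⁻¹' s ∈ @nhds G τ 0 := by
  letI := τ; haveI := htg
  have hc : Continuous (x + ·) := continuous_add_left x
  have hx' : s ∈ 𝓝 (x + (0 : G)) := by rw [add_zero]; exact hs.mem_nhds hx
  exact hc.continuousAt.preimage_mem_nhds hx'

lemma mem_nhds_of_translate (τ : TopologicalSpace G) (htg : @IsTopologicalAddGroup G τ _)
    {s : Set G} {x : G} (h : (x + ·) ⁻¹' s ∈ @nhds G τ 0) : s ∈ @nhds G τ x := by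
  letI := τ; haveI := htg
  rw [← map_add_left_nhds_zero x, mem_map]
  exact h

/-! ### The main theorem -/

theorem stmt12 {G : Type*} [AddCommGroup G] (hb : BoundedGroup G)
    (τ : TopologicalSpace G) (htg : @IsTopologicalAddGroup G τ _)
    (H : AddSubgroup G) (hopen : @IsOpen G τ (H : Set G))
    (hHM : IsMackey (TopologicalSpace.induced (Subtype.val : H → G) τ)) :
    IsMackey τ := by
  classical
  obtain ⟨htgH, hlqcH, hmaxH⟩ := hHM
  set σ := TopologicalSpace.induced (Subtype.val : H → G) τ with hσ
  -- every continuous character of (H, σ) extends to a continuous character of (G, τ)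
  have extchar : ∀ ψ : H →+ Circle1, IsChar σ ψ →
      ∃ g : G →+ Circle1, IsChar τ g ∧ ∀ h : H, g h = ψ h := by
    intro ψ hψ
    obtain ⟨g, hg⟩ := exists_extension H ψ
    have hcomp : g.comp H.subtype = ψ := by
      ext h; exact hg h
    refine ⟨g, isChar_of_openSubgroup_cont τ htg H hopen g ?_, hg⟩
    rw [hcomp]; exact hψ
  -- the quotient separation character
  have hHnhds : (H : Set G) ∈ @nhds G τ 0 := by
    letI := τ; haveI := htg
    exact hopen.mem_nhds H.zero_mem
  obtain ⟨m, hm0, hmx⟩ := hb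
  have vanchar : ∀ x : G, x ∉ H → ∃ χ : G →+ Circle1, IsChar τ χ ∧
      (∀ h ∈ H, χ h = 0) ∧ χ x ∉ Tpos := by
    intro x hx
    set q : G ⧸ H := QuotientAddGroup.mk x with hq
    have hq0 : q ≠ 0 := fun h => hx ((QuotientAddGroup.eq_zero_iff x).mp h)
    have hqfin : IsOfFinAddOrder q := by
      refine isOfFinAddOrder_iff_nsmul_eq_zero.mpr ⟨m, hm0, ?_⟩
      have : (m • q) = QuotientAddGroup.mk (m • x) := by
        rw [hq]
        exact ((QuotientAddGroup.mk' H).map_nsmul m x).symm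
      rw [this, hmx, QuotientAddGroup.mk_zero]
    set n : ℕ := addOrderOf q with hn
    have hn0 : 0 < n := hqfin.addOrderOf_pos
    have hn1 : n ≠ 1 := fun h => hq0 (AddMonoid.addOrderOf_eq_one_iff.mp h)
    have hn2 : 2 ≤ n := by omega
    set c : Circle1 := (((n : ℝ)⁻¹ : ℝ) : Circle1) with hc
    have hcne : c ≠ 0 := by
      rw [hc, Ne, AddCircle.coe_eq_zero_iff]
      rintro ⟨k, hk⟩
      have hk' : (k : ℝ) = (n : ℝ)⁻¹ := by simpa using hk
      have hnR : (2 : ℝ) ≤ (n : ℝ) := by exact_mod_cast hn2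
      have hpos : (0 : ℝ) < (n : ℝ)⁻¹ := by positivity
      have hlt : (n : ℝ)⁻¹ < 1 := by
        rw [inv_lt_one_iff₀]; right; linarith
      have c1 : (0 : ℝ) < (k : ℝ) := hk' ▸ hpos
      have c2 : (k : ℝ) < 1 := hk' ▸ hlt
      have d1 : (0 : ℤ) < k := by exact_mod_cast c1
      have d2 : (k : ℤ) < 1 := by exact_mod_cast c2
      omega
    -- character on the quotient with χ' q = c
    obtain ⟨χ', hχ'⟩ := fact_hom (zmultiplesHom (G ⧸ H) q) (zmultiplesHom Circle1 c) (by
      intro j hj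
      simp only [zmultiplesHom_apply] at hj ⊢
      have hdvd : (n : ℤ) ∣ j := addOrderOf_dvd_iff_zsmul_eq_zero.mpr hj
      obtain ⟨k, rfl⟩ := hdvd
      rw [hc, ← AddCircle.coe_zsmul 1]
      rw [AddCircle.coe_eq_zero_iff]
      refine ⟨k, ?_⟩
      have hnne : (n : ℝ) ≠ 0 := by positivity
      push_cast [zsmul_eq_mul]
      field_simp)
    have hχ'q : χ' q = c := by
      have := hχ' 1
      simpa using this
    -- find a multiple escaping Tpos
    have hesc : ∃ j : ℤ, j • (χ' q) ∉ Tpos := by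
      by_contra hcon
      push_neg at hcon
      exact hcne (hχ'q ▸ eq_zero_of_forall_zsmul_mem_Tpos hcon)
    obtain ⟨j, hj⟩ := hesc
    set χ : G →+ Circle1 := (j • χ').comp (QuotientAddGroup.mk' H) with hχdef
    have hker : ∀ h ∈ H, χ h = 0 := by
      intro h hh
      rw [hχdef]
      simp only [AddMonoidHom.comp_apply, QuotientAddGroup.mk'_apply]
      rw [(QuotientAddGroup.eq_zero_iff h).mpr hh]
      simp
    refine ⟨χ, isChar_of_ker_nhds τ htg H hHnhds χ hker, hker, ?_⟩
    rw [hχdef]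
    simpa using hj
  -- Part 1 : τ is locally quasi-convex
  have hlqcG : LocallyQuasiConvex τ := by
    intro U hU
    have hU' : (Subtype.val : H → G) ⁻¹' U ∈ @nhds H σ 0 := by
      rw [hσ, nhds_induced]
      exact preimage_mem_comap hU
    obtain ⟨M', hM', hqc', hM'U⟩ := hlqcH _ hU'
    refine ⟨Subtype.val '' M', ?_, ?_, ?_⟩
    · -- M' contains val ⁻¹ V for τ-open V ∋ 0; so image is a τ-neighborhood of 0
      rw [hσ, nhds_induced] at hM'
      obtain ⟨V, hV, hVM'⟩ := hM'
      have hval0 : (Subtype.val : H → G) 0 = 0 := rfl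
      rw [hval0] at hV
      letI := τ; haveI := htg
      obtain ⟨W, hWV, hWopen, hW0⟩ := mem_nhds_iff.mp hV
      refine mem_of_superset ((hWopen.inter hopen).mem_nhds ⟨hW0, H.zero_mem⟩) ?_
      rintro y ⟨hyW, hyH⟩
      exact ⟨⟨y, hyH⟩, hVM' (hWV hyW), rfl⟩
    · -- quasi-convexity
      rintro x hx
      by_cases hxH : x ∈ H
      · have hxM' : (⟨x, hxH⟩ : H) ∉ M' := fun hmem => hx ⟨⟨x, hxH⟩, hmem, rfl⟩
        obtain ⟨ψ, hψ, hψM, hψx⟩ := hqc' _ hxM'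
        obtain ⟨g, hgτ, hg⟩ := extchar ψ hψ
        refine ⟨g, hgτ, ?_, ?_⟩
        · rintro y ⟨y', hy', rfl⟩
          rw [hg y']
          exact hψM y' hy'
        · rw [show x = ((⟨x, hxH⟩ : H) : G) from rfl, hg]
          exact hψx
      · obtain ⟨χ, hχτ, hχH, hχx⟩ := vanchar x hxH
        refine ⟨χ, hχτ, ?_, hχx⟩
        rintro y ⟨y', _, rfl⟩
        rw [hχH y' y'.2]
        exact zero_mem_Tpos
    · rintro y ⟨y', hy', rfl⟩
      exact hM'U hy'
  refine ⟨htg, hlqcG, ?_⟩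
  -- Part 2 : maximality
  intro τ' htg' hlqc' hcompat
  set σ' := TopologicalSpace.induced (Subtype.val : H → G) τ' with hσ'
  have htgH' : @IsTopologicalAddGroup H σ' _ := by
    letI := τ'; haveI := htg'
    exact (inferInstance : IsTopologicalAddGroup H)
  have hlqcH' : LocallyQuasiConvex σ' := lqc_induced τ' hlqc' H
  have hbH : BoundedGroup H := ⟨m, hm0, fun x => by
    ext
    push_cast
    exact hmx _⟩
  have hcompH : Compatible σ σ' := by
    intro ψ
    constructor
    · intro hψ
      obtain ⟨g, hgτ, hg⟩ := extchar ψ hψ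
      have hgτ' : IsChar τ' g := (hcompat g).mp hgτ
      have hres := isChar_restrict τ' g hgτ' H
      have hcomp : g.comp H.subtype = ψ := by ext h; exact hg h
      rwa [hcomp] at hres
    · intro hψ
      -- ψ⁻¹ Tpos is a σ'-neighborhood of 0
      have h1 : (⇑ψ) ⁻¹' Tpos ∈ @nhds H σ' 0 := by
        letI := σ'
        have h0 : ψ (0 : H) = 0 := map_zero ψ
        exact hψ.continuousAt.preimage_mem_nhds (h0 ▸ Tpos_mem_nhds)
      rw [hσ', nhds_induced] at h1
      have hval0 : (Subtype.val : H → G) 0 = 0 := rfl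
      rw [hval0] at h1
      obtain ⟨W, hW, hWψ⟩ := h1
      obtain ⟨N', hN'open, hN'W⟩ := linearTop_of_lqc ⟨m, hm0, hmx⟩ τ' htg' hlqc' W hW
      have hk : ∀ h : H, (h : G) ∈ N' → ψ h = 0 := by
        intro h hh
        apply eq_zero_of_forall_zsmul_mem_Tpos
        intro j
        rw [← map_zsmul]
        have hmem : ((j • h : H) : G) ∈ N' := by
          have : ((j • h : H) : G) = j • (h : G) := by push_cast; ring
          rw [this]
          exact N'.zsmul_mem hh j
        have : (j • h : H) ∈ (Subtype.val : H → G) ⁻¹' W := hN'W hmem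
        exact hWψ this
      obtain ⟨g, hgH, hgN⟩ := exists_extension_vanishing H N' ψ hk
      have hgτ' : IsChar τ' g := by
        apply isChar_of_ker_nhds τ' htg' N' ?_ g hgN
        letI := τ'; haveI := htg'
        exact hN'open.mem_nhds N'.zero_mem
      have hgτ : IsChar τ g := (hcompat g).mpr hgτ'
      have hres := isChar_restrict τ g hgτ H
      have hcomp : g.comp H.subtype = ψ := by ext h; exact hgH h
      rwa [hcomp] at hres
  have hle : σ ≤ σ' := hmaxH σ' htgH' hlqcH' hcompH
  -- key claim: every τ'-neighborhood of 0 is a τ-neighborhood of 0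
  have K : ∀ U ∈ @nhds G τ' 0, U ∈ @nhds G τ 0 := by
    intro U hU
    obtain ⟨N, hNopen', hNU⟩ := linearTop_of_lqc ⟨m, hm0, hmx⟩ τ' htg' hlqc' U hU
    have h1 : @IsOpen H σ' (Subtype.val ⁻¹' (N : Set G)) := by
      rw [hσ']
      exact isOpen_induced_of τ' H hNopen'
    have h2 : @IsOpen H σ (Subtype.val ⁻¹' (N : Set G)) := hle _ h1
    obtain ⟨V, hV, hVN⟩ := isOpen_induced_decomp τ H (by rw [← hσ]; exact h2)
    have hsub : V ∩ (H : Set G) ⊆ (N : Set G) := by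
      rintro x ⟨hxV, hxH⟩
      have : (⟨x, hxH⟩ : H) ∈ Subtype.val ⁻¹' V := hxV
      rw [hVN] at this
      exact this
    have h0V : (0 : G) ∈ V := by
      have h0N : (⟨0, H.zero_mem⟩ : H) ∈ Subtype.val ⁻¹' (N : Set G) := by
        simp [N.zero_mem]
      rw [← hVN] at h0N
      exact h0N
    letI := τ; haveI := htg
    refine mem_of_superset ((hV.inter hopen).mem_nhds ⟨h0V, H.zero_mem⟩) (hsub.trans hNU)
  -- conclude τ ≤ τ'
  rw [TopologicalSpace.le_def]
  intro s hs
  have hs' : @IsOpen G τ' s := hs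
  show @IsOpen G τ s
  letI := τ
  rw [isOpen_iff_mem_nhds]
  intro x hx
  exact mem_nhds_of_translate τ htg (K _ (preimage_nhds_translate τ' htg' hs' hx))

end
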